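/- Let u*, w, u_d be measurable functions on Ω with u_d ≤ w almost everywhere, let v = min{u*, w}, and let 1 ≤ p < ∞. If ‖v − u_d‖_{L^p(Ω)} = ‖u* − u_d‖_{L^p(Ω)} < ∞, then u* ≤ w almost everywhere in Ω. (Key step: |w − u_d| < |u* − u_d| pointwise on {u* > w}, so equality of L^p norms forces {u* > w} to be Lebesgue-null.) -/

import Mathlib

open MeasureTheory Set Filter Topology
open scoped ENNReal NNReal

/-- If `u_d ≤ w` a.e., `v = min{u*, w}`, `1 ≤ p < ∞` and
`‖v − u_d‖_{L^p(Ω)} = ‖u* − u_d‖_{L^p(Ω)} < ∞`, then `u* ≤ w` a.e. in `Ω`. -/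
theorem ae_le_of_eLpNorm_min_eq {N : ℕ}
    (Ω : Set (EuclideanSpace ℝ (Fin N))) (hΩo : IsOpen Ω)
    (hΩb : Bornology.IsBounded Ω) (p : ℝ) (hp : 1 ≤ p)
    (ustar w ud : EuclideanSpace ℝ (Fin N) → ℝ)
    (hu : Measurable ustar) (hw : Measurable w) (hud : Measurable ud)
    (hle : ∀ᵐ x ∂volume.restrict Ω, ud x ≤ w x)
    (hfin : eLpNorm (fun x => ustar x - ud x) (ENNReal.ofReal p)
      (volume.restrict Ω) < ⊤)
    (heq : eLpNorm (fun x => min (ustar x) (w x) - ud x) (ENNReal.ofReal p)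
        (volume.restrict Ω) =
      eLpNorm (fun x => ustar x - ud x) (ENNReal.ofReal p) (volume.restrict Ω)) :
    ∀ᵐ x ∂volume.restrict Ω, ustar x ≤ w x := by
  set μ := volume.restrict Ω
  have hp0 : 0 < p := lt_of_lt_of_le one_pos hp
  have hq0 : ENNReal.ofReal p ≠ 0 := by
    simp [ENNReal.ofReal_eq_zero, not_le, hp0]
  have hqt : ENNReal.ofReal p ≠ ⊤ := ENNReal.ofReal_ne_top
  have hr : (ENNReal.ofReal p).toReal = p := ENNReal.toReal_ofReal hp0.le
  set F : EuclideanSpace ℝ (Fin N) → ℝ≥0∞ :=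
    fun x => (‖min (ustar x) (w x) - ud x‖₊ : ℝ≥0∞) ^ p with hF
  set G : EuclideanSpace ℝ (Fin N) → ℝ≥0∞ :=
    fun x => (‖ustar x - ud x‖₊ : ℝ≥0∞) ^ p with hG
  have hFm : Measurable F := by
    apply Measurable.pow_const
    exact ((hu.min hw).sub hud).nnnorm.coe_nnreal_ennreal
  have hGm : Measurable G := by
    apply Measurable.pow_const
    exact (hu.sub hud).nnnorm.coe_nnreal_ennreal
  have hGform : eLpNorm (fun x => ustar x - ud x) (ENNReal.ofReal p) μ
      = (∫⁻ x, G x ∂μ) ^ (1 / p) := by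
    rw [eLpNorm_eq_lintegral_rpow_enorm_toReal hq0 hqt, hr]; rfl
  have hFform : eLpNorm (fun x => min (ustar x) (w x) - ud x) (ENNReal.ofReal p) μ
      = (∫⁻ x, F x ∂μ) ^ (1 / p) := by
    rw [eLpNorm_eq_lintegral_rpow_enorm_toReal hq0 hqt, hr]; rfl
  -- lintegrals equal
  have hint_eq : ∫⁻ x, F x ∂μ = ∫⁻ x, G x ∂μ := by
    have := heq
    rw [hFform, hGform] at this
    have hinj : Function.Injective fun y : ℝ≥0∞ => y ^ (1 / p) :=
      ENNReal.rpow_left_injective (by positivity)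
    exact hinj this
  -- G integral finite
  have hGfin : ∫⁻ x, G x ∂μ ≠ ⊤ := by
    intro h
    rw [hGform, h] at hfin
    rw [ENNReal.top_rpow_of_pos (by positivity)] at hfin
    exact lt_irrefl _ hfin
  -- F ≤ G a.e.
  have hFle : F ≤ᵐ[μ] G := by
    filter_upwards [hle] with x hx
    have habs : |min (ustar x) (w x) - ud x| ≤ |ustar x - ud x| := by
      rcases le_total (ustar x) (w x) with h | h
      · rw [min_eq_left h]
      · rw [min_eq_right h]
        rw [abs_of_nonneg (by linarith), abs_of_nonneg (by linarith)]
        linarith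
    have : (‖min (ustar x) (w x) - ud x‖₊ : ℝ≥0∞) ≤ ‖ustar x - ud x‖₊ := by
      simp only [ENNReal.coe_le_coe, ← NNReal.coe_le_coe, coe_nnnorm,
        Real.norm_eq_abs]
      exact habs
    exact ENNReal.rpow_le_rpow this hp0.le
  -- hence F = G a.e.
  have hdiff : ∫⁻ x, (G x - F x) ∂μ = 0 := by
    rw [lintegral_sub hFm (by rw [hint_eq]; exact hGfin) hFle, hint_eq,
      tsub_self]
  have hFG : ∀ᵐ x ∂μ, F x = G x := by
    have h0 := (lintegral_eq_zero_iff (hGm.sub hFm)).mp hdiff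
    filter_upwards [h0, hFle] with x h1 h2
    have : G x ≤ F x := tsub_eq_zero_iff_le.mp h1
    exact le_antisymm h2 this
  filter_upwards [hFG, hle] with x hx hx2
  by_contra hcon
  push_neg at hcon
  have hmin : min (ustar x) (w x) = w x := min_eq_right hcon.le
  have : (‖min (ustar x) (w x) - ud x‖₊ : ℝ≥0∞) = ‖ustar x - ud x‖₊ := by
    have hinj : Function.Injective fun y : ℝ≥0∞ => y ^ p :=
      ENNReal.rpow_left_injective (ne_of_gt hp0)
    exact hinj hx
  have habs : |w x - ud x| = |ustar x - ud x| := by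
    rw [hmin] at this
    have := congrArg ENNReal.toReal this
    simpa [Real.norm_eq_abs] using this
  rw [abs_of_nonneg (by linarith), abs_of_nonneg (by linarith)] at habs
  linarith
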